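/- Let N be a submultiplicative consensus seminorm on E^{n×n}, and let 𝒞 be a compact set of matrices in E^{n×n}, each of whose row sums all equal 1 and each satisfying N(M) < 1; set λ = max_{M ∈ 𝒞} N(M). Then for every infinite sequence M₁, M₂, … of matrices from 𝒞, the product M_i M_{i−1} ⋯ M₁ converges as i → ∞ to a rank-one matrix of the form 𝟏c for some row vector c, and convergence occurs as fast as λ^i converges to zero: there is a constant K such that ‖M_i M_{i−1} ⋯ M₁ − 𝟏c‖ ≤ K·λ^i for all i ≥ 1. -/

import Mathlib

open Matrix Finset
open scoped ENNReal

noncomputable def matPNorm (p : ℝ≥0∞) [Fact (1 ≤ p)] {n m : ℕ}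
    (M : Matrix (Fin n) (Fin m) ℝ) : ℝ :=
  ‖LinearMap.toContinuousLinearMap
    (Matrix.toLin (PiLp.basisFun p ℝ (Fin m)) (PiLp.basisFun p ℝ (Fin n)) M)‖

noncomputable def metricSN (p : ℝ≥0∞) [Fact (1 ≤ p)] {n m : ℕ}
    (M : Matrix (Fin n) (Fin m) ℝ) : ℝ :=
  ⨅ c : Fin m → ℝ, matPNorm p (M - Matrix.of fun _ j => c j)

noncomputable def vecSN (p : ℝ≥0∞) [Fact (1 ≤ p)] {m : ℕ} (x : Fin m → ℝ) : ℝ :=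
  ⨅ c : ℝ, ‖(WithLp.equiv p (Fin m → ℝ)).symm (x - fun _ => c)‖

noncomputable def inducedSN (p : ℝ≥0∞) [Fact (1 ≤ p)] {n m : ℕ}
    (M : Matrix (Fin n) (Fin m) ℝ) : ℝ :=
  sSup {r | ∃ x : Fin m → ℝ, vecSN p x = 1 ∧ r = vecSN p (M.mulVec x)}

noncomputable def coeErg {n : ℕ} (M : Matrix (Fin n) (Fin n) ℝ) : ℝ :=
  (1 / 2) * ⨆ i : Fin n, ⨆ j : Fin n, ∑ k, |M i k - M j k|

def IsStochastic {n : ℕ} (S : Matrix (Fin n) (Fin n) ℝ) : Prop :=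
  (∀ i j, 0 ≤ S i j) ∧ ∀ i, ∑ j, S i j = 1

def IsScrambling {n : ℕ} (S : Matrix (Fin n) (Fin n) ℝ) : Prop :=
  IsStochastic S ∧ ∀ i j, ∃ k, 0 < S i k ∧ 0 < S j k

def EqRowSum (n m : ℕ) : Submodule ℝ (Matrix (Fin n) (Fin m) ℝ) where
  carrier := {M | ∀ i i', ∑ j, M i j = ∑ j, M i' j}
  add_mem' := by
    intro A B hA hB i i'
    simp only [Matrix.add_apply, Finset.sum_add_distrib, hA i i', hB i i']
  zero_mem' := by intro i i'; simp
  smul_mem' := by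
    intro c A hA i i'
    simp only [Matrix.smul_apply, smul_eq_mul, ← Finset.mul_sum, hA i i']

noncomputable def prodSeq {n : ℕ} (M : ℕ → Matrix (Fin n) (Fin n) ℝ) :
    ℕ → Matrix (Fin n) (Fin n) ℝ
  | 0 => 1
  | (i + 1) => M i * prodSeq M i

/-- The space of matrices with equal row sums is closed under matrix products. -/
lemma EqRowSum.mul_mem {n : ℕ} {A B : Matrix (Fin n) (Fin n) ℝ}
    (hA : A ∈ EqRowSum n n) (hB : B ∈ EqRowSum n n) : A * B ∈ EqRowSum n n := by
  intro i i'
  have key : ∀ r : Fin n, ∑ j, (A * B) r j = (∑ k, A r k) * (∑ j, B r j) := by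
    intro r
    calc ∑ j, (A * B) r j = ∑ j, ∑ k, A r k * B k j := by simp [Matrix.mul_apply]
    _ = ∑ k, ∑ j, A r k * B k j := Finset.sum_comm
    _ = ∑ k, A r k * (∑ j, B k j) := by simp [Finset.mul_sum]
    _ = ∑ k, A r k * (∑ j, B r j) := Finset.sum_congr rfl fun k _ => by rw [hB k r]
    _ = (∑ k, A r k) * (∑ j, B r j) := by rw [Finset.sum_mul]
  rw [key i, key i', hA i i', hB i i']

section AuxConsensus

attribute [local instance] Matrix.normedAddCommGroup Matrix.normedSpace

/-- Every seminorm on a finite-dimensional real normed space is continuous. -/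
lemma seminorm_continuous_fd {F : Type*} [NormedAddCommGroup F] [NormedSpace ℝ F]
    [FiniteDimensional ℝ F] (p : Seminorm ℝ F) : Continuous p := by
  let b := Module.finBasis ℝ F
  set g : F → ℝ := fun x => ∑ i, ‖b.equivFun x i‖ * p (b i) with hg
  have hgc : Continuous g := by
    apply continuous_finset_sum
    intro i _
    exact (((continuous_apply i).comp
      b.equivFun.toLinearMap.continuous_of_finiteDimensional).norm).mul continuous_const
  have hpg : ∀ x, p x ≤ g x := by
    intro x
    calc p x = p (∑ i, b.equivFun x i • b i) := by rw [b.sum_equivFun]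
    _ ≤ ∑ i, p (b.equivFun x i • b i) :=
        Finset.le_sum_of_subadditive p (map_zero p).le (fun a c => map_add_le_add p a c) _ _
    _ = g x := by simp [hg, map_smul_eq_mul]
  have hat0 : ContinuousAt p 0 := by
    rw [ContinuousAt, map_zero]
    have hg0 : Filter.Tendsto g (nhds 0) (nhds 0) := by
      have h0 : g 0 = 0 := by simp [hg]
      have := hgc.tendsto 0
      rwa [h0] at this
    exact tendsto_of_tendsto_of_tendsto_of_le_of_le tendsto_const_nhds hg0
      (fun x => apply_nonneg p x) hpg
  exact Seminorm.continuous_of_continuousAt_zero hat0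

noncomputable def matL (n : ℕ) : Matrix (Fin n) (Fin n) ℝ →ₗ[ℝ]
    ((PiLp 2 fun _ : Fin n => ℝ) →L[ℝ] (PiLp 2 fun _ : Fin n => ℝ)) :=
  (LinearMap.toContinuousLinearMap.toLinearMap).comp
    (Matrix.toLin (PiLp.basisFun 2 ℝ (Fin n)) (PiLp.basisFun 2 ℝ (Fin n))).toLinearMap

lemma matPNorm_eq_matL {n : ℕ} (A : Matrix (Fin n) (Fin n) ℝ) :
    matPNorm 2 A = ‖matL n A‖ := rfl

lemma matPNorm_nonneg {n : ℕ} (A : Matrix (Fin n) (Fin n) ℝ) : 0 ≤ matPNorm 2 A :=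
  norm_nonneg _

lemma matPNorm_add_le {n : ℕ} (A B : Matrix (Fin n) (Fin n) ℝ) :
    matPNorm 2 (A + B) ≤ matPNorm 2 A + matPNorm 2 B := by
  rw [matPNorm_eq_matL, matPNorm_eq_matL, matPNorm_eq_matL, map_add]
  exact norm_add_le _ _

lemma matPNorm_sub_comm {n : ℕ} (A B : Matrix (Fin n) (Fin n) ℝ) :
    matPNorm 2 (A - B) = matPNorm 2 (B - A) := by
  rw [matPNorm_eq_matL, matPNorm_eq_matL, map_sub, map_sub, norm_sub_rev]

lemma matPNorm_smul {n : ℕ} (c : ℝ) (A : Matrix (Fin n) (Fin n) ℝ) :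
    matPNorm 2 (c • A) = ‖c‖ * matPNorm 2 A := by
  rw [matPNorm_eq_matL, matPNorm_eq_matL, _root_.map_smul]
  exact norm_smul c ((matL n) A)

lemma matPNorm_mul_le {n : ℕ} (A B : Matrix (Fin n) (Fin n) ℝ) :
    matPNorm 2 (A * B) ≤ matPNorm 2 A * matPNorm 2 B := by
  have h : matL n (A * B) = (matL n A).comp (matL n B) := by
    apply ContinuousLinearMap.coe_injective
    show Matrix.toLin (PiLp.basisFun 2 ℝ (Fin n)) (PiLp.basisFun 2 ℝ (Fin n)) (A * B) = _
    rw [Matrix.toLin_mul (PiLp.basisFun 2 ℝ (Fin n)) (PiLp.basisFun 2 ℝ (Fin n))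
      (PiLp.basisFun 2 ℝ (Fin n))]
    rfl
  rw [matPNorm_eq_matL, matPNorm_eq_matL, matPNorm_eq_matL, h]
  exact ContinuousLinearMap.opNorm_comp_le _ _

lemma matPNorm_continuous (n : ℕ) :
    Continuous fun A : Matrix (Fin n) (Fin n) ℝ => matPNorm 2 A :=
  (matL n).continuous_of_finiteDimensional.norm

lemma matPNorm_eq_zero_iff {n : ℕ} {A : Matrix (Fin n) (Fin n) ℝ} :
    matPNorm 2 A = 0 ↔ A = 0 := by
  rw [matPNorm_eq_matL, norm_eq_zero]
  constructor
  · intro h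
    have h2 : Matrix.toLin (PiLp.basisFun 2 ℝ (Fin n)) (PiLp.basisFun 2 ℝ (Fin n)) A = 0 :=
      LinearMap.toContinuousLinearMap.injective (h.trans (map_zero _).symm)
    exact (Matrix.toLin _ _).map_eq_zero_iff.mp h2
  · rintro rfl
    exact map_zero _

lemma matPNorm_le_norm (n : ℕ) : ∃ β : ℝ, 0 < β ∧
    ∀ A : Matrix (Fin n) (Fin n) ℝ, matPNorm 2 A ≤ β * ‖A‖ := by
  obtain ⟨C, hC, hCle⟩ := SemilinearMapClass.bound_of_continuous (matL n) (matL n).continuous_of_finiteDimensional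
  exact ⟨C, hC, fun A => hCle A⟩

lemma norm_le_matPNorm (n : ℕ) : ∃ γ : ℝ, 0 < γ ∧
    ∀ A : Matrix (Fin n) (Fin n) ℝ, ‖A‖ ≤ γ * matPNorm 2 A := by
  by_cases hS : (Metric.sphere (0 : Matrix (Fin n) (Fin n) ℝ) 1).Nonempty
  · obtain ⟨A₀, hA₀S, hmin⟩ := (isCompact_sphere (0 : Matrix (Fin n) (Fin n) ℝ) 1).exists_isMinOn
      hS (matPNorm_continuous n).continuousOn
    have hA₀ : ‖A₀‖ = 1 := by simpa using hA₀S
    have hpos : 0 < matPNorm 2 A₀ := by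
      rcases (matPNorm_nonneg A₀).lt_or_eq with h | h
      · exact h
      · exfalso
        have hz : A₀ = 0 := matPNorm_eq_zero_iff.mp h.symm
        rw [hz] at hA₀
        simp at hA₀
    refine ⟨(matPNorm 2 A₀)⁻¹, inv_pos.mpr hpos, fun A => ?_⟩
    rcases eq_or_ne A 0 with rfl | hA
    · simp [matPNorm_eq_zero_iff.mpr rfl]
    · have hAn : ‖A‖ ≠ 0 := norm_ne_zero_iff.mpr hA
      have hAp : 0 < ‖A‖ := (norm_nonneg A).lt_of_ne (Ne.symm hAn)
      have hmem : (‖A‖⁻¹ • A) ∈ Metric.sphere (0 : Matrix (Fin n) (Fin n) ℝ) 1 := by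
        rw [mem_sphere_zero_iff_norm, norm_smul ‖A‖⁻¹ A, norm_inv, norm_norm,
          inv_mul_cancel₀ hAn]
      have h2 : matPNorm 2 A₀ ≤ matPNorm 2 (‖A‖⁻¹ • A) := hmin hmem
      rw [matPNorm_smul, norm_inv, norm_norm] at h2
      have key : matPNorm 2 A₀ * ‖A‖ ≤ matPNorm 2 A := by
        have h3 := mul_le_mul_of_nonneg_left h2 hAp.le
        rw [← mul_assoc, mul_inv_cancel₀ hAn, one_mul] at h3
        nlinarith [h3]
      have h5 := mul_le_mul_of_nonneg_left key (inv_nonneg.mpr hpos.le)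
      rw [← mul_assoc, inv_mul_cancel₀ hpos.ne', one_mul] at h5
      exact h5
  · refine ⟨1, one_pos, fun A => ?_⟩
    have hA : A = 0 := by
      by_contra h
      exact hS ⟨‖A‖⁻¹ • A, by
        rw [mem_sphere_zero_iff_norm, norm_smul ‖A‖⁻¹ A, norm_inv, norm_norm,
          inv_mul_cancel₀ (norm_ne_zero_iff.mpr h)]⟩
    subst hA
    simp [matPNorm_eq_zero_iff.mpr rfl]

def consMap (n : ℕ) : (Fin n → ℝ) →ₗ[ℝ] Matrix (Fin n) (Fin n) ℝ where
  toFun := fun c => Matrix.of fun _ j => c j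
  map_add' := fun _ _ => rfl
  map_smul' := fun _ _ => rfl

lemma consMap_mem (n : ℕ) (c : Fin n → ℝ) : consMap n c ∈ EqRowSum n n :=
  fun _ _ => rfl

lemma exists_good_approx (n : ℕ) (N : Seminorm ℝ (EqRowSum n n))
    (hcons : ∀ M : EqRowSum n n,
      N M = 0 ↔ ∃ c : Fin n → ℝ, (M : Matrix (Fin n) (Fin n) ℝ) = Matrix.of fun _ j => c j) :
    ∃ α : ℝ, 0 < α ∧ ∀ x : EqRowSum n n, ∃ c : Fin n → ℝ,
      matPNorm 2 ((x : Matrix (Fin n) (Fin n) ℝ) - Matrix.of fun _ j => c j) ≤ α * N x := by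
  classical
  obtain ⟨β, hβ, hβle⟩ := matPNorm_le_norm n
  set V : Submodule ℝ (EqRowSum n n) :=
    LinearMap.range ((consMap n).codRestrict (EqRowSum n n) (consMap_mem n)) with hV
  have hVmem : ∀ x : EqRowSum n n, x ∈ V ↔
      ∃ c : Fin n → ℝ, (x : Matrix (Fin n) (Fin n) ℝ) = Matrix.of fun _ j => c j := by
    intro x
    constructor
    · rintro ⟨c, rfl⟩
      exact ⟨c, rfl⟩
    · rintro ⟨c, hc⟩
      exact ⟨c, Subtype.ext hc.symm⟩
  obtain ⟨W, hW⟩ := Submodule.exists_isCompl V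
  have hNcont : Continuous fun x : EqRowSum n n => N x := seminorm_continuous_fd N
  have heps : ∃ ε : ℝ, 0 < ε ∧ ∀ w : EqRowSum n n, w ∈ W → ε * ‖w‖ ≤ N w := by
    by_cases hS : ((W : Set (EqRowSum n n)) ∩ Metric.sphere 0 1).Nonempty
    · have hcpt : IsCompact ((W : Set (EqRowSum n n)) ∩ Metric.sphere 0 1) :=
        (isCompact_sphere 0 1).inter_left (Submodule.closed_of_finiteDimensional W)
      obtain ⟨w₀, hw₀, hminw⟩ := hcpt.exists_isMinOn hS hNcont.continuousOn
      have hw₀n : ‖w₀‖ = 1 := by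
        have := hw₀.2
        simpa using this
      have hw₀pos : 0 < N w₀ := by
        rcases (apply_nonneg N w₀).lt_or_eq with h | h
        · exact h
        · exfalso
          have hv : w₀ ∈ V := (hVmem w₀).mpr ((hcons w₀).mp h.symm)
          have hz : w₀ = 0 := Submodule.disjoint_def.mp hW.disjoint w₀ hv hw₀.1
          rw [hz] at hw₀n
          simp at hw₀n
      refine ⟨N w₀, hw₀pos, fun w hw => ?_⟩
      rcases eq_or_ne w 0 with rfl | hwne
      · simp
      · have hwn : ‖w‖ ≠ 0 := norm_ne_zero_iff.mpr hwne
        have hmem : (‖w‖⁻¹ • w) ∈ (W : Set (EqRowSum n n)) ∩ Metric.sphere 0 1 :=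
          ⟨W.smul_mem _ hw, mem_sphere_zero_iff_norm.mpr (by
            rw [norm_smul ‖w‖⁻¹ w, norm_inv, norm_norm, inv_mul_cancel₀ hwn])⟩
        have h2 : N w₀ ≤ N (‖w‖⁻¹ • w) := hminw hmem
        have h2' : N (‖w‖⁻¹ • w) = ‖(‖w‖⁻¹ : ℝ)‖ * N w := map_smul_eq_mul N _ _
        rw [h2', norm_inv, norm_norm] at h2
        have h3 := mul_le_mul_of_nonneg_left h2 (norm_nonneg w)
        rw [← mul_assoc, mul_inv_cancel₀ hwn, one_mul] at h3
        nlinarith [h3]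
    · refine ⟨1, one_pos, fun w hw => ?_⟩
      have hz : w = 0 := by
        by_contra h
        exact hS ⟨‖w‖⁻¹ • w, W.smul_mem _ hw, mem_sphere_zero_iff_norm.mpr (by
          rw [norm_smul ‖w‖⁻¹ w, norm_inv, norm_norm, inv_mul_cancel₀ (norm_ne_zero_iff.mpr h)])⟩
      simp [hz]
  obtain ⟨ε, hε, hεle⟩ := heps
  refine ⟨β / ε, div_pos hβ hε, fun x => ?_⟩
  obtain ⟨v, w, hvw, -⟩ := Submodule.existsUnique_add_of_isCompl hW x
  obtain ⟨c, hc⟩ := (hVmem v).mp v.2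
  refine ⟨c, ?_⟩
  have hxw : (x : Matrix (Fin n) (Fin n) ℝ) - Matrix.of (fun _ j => c j) =
      ((w : EqRowSum n n) : Matrix (Fin n) (Fin n) ℝ) := by
    rw [← hc, ← hvw]
    push_cast
    abel
  rw [hxw]
  have hNv : N (v : EqRowSum n n) = 0 := (hcons _).mpr ⟨c, hc⟩
  have hNxw : N x = N (w : EqRowSum n n) := by
    have h1 : N x ≤ N (w : EqRowSum n n) := by
      have h := map_add_le_add N (v : EqRowSum n n) (w : EqRowSum n n)
      rw [hvw, hNv, zero_add] at h
      exact h
    have h2 : N (w : EqRowSum n n) ≤ N x := by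
      have heq : (w : EqRowSum n n) = x - (v : EqRowSum n n) := by
        rw [← hvw]; abel
      rw [heq]
      calc N (x - (v : EqRowSum n n)) ≤ N x + N (v : EqRowSum n n) := map_sub_le_add N _ _
      _ = N x := by rw [hNv, add_zero]
    exact le_antisymm h1 h2
  have hεw := hεle _ w.2
  have h' : ‖(w : EqRowSum n n)‖ ≤ ε⁻¹ * N (w : EqRowSum n n) := by
    have h4 := mul_le_mul_of_nonneg_left hεw (inv_nonneg.mpr hε.le)
    rw [← mul_assoc, inv_mul_cancel₀ hε.ne', one_mul] at h4
    exact h4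
  calc matPNorm 2 ((w : EqRowSum n n) : Matrix (Fin n) (Fin n) ℝ)
      ≤ β * ‖(w : EqRowSum n n)‖ := hβle _
  _ ≤ β * (ε⁻¹ * N (w : EqRowSum n n)) := mul_le_mul_of_nonneg_left h' hβ.le
  _ = (β / ε) * N x := by rw [hNxw]; ring

end AuxConsensus

/-- Let N be a submultiplicative consensus seminorm on E^{n×n} and 𝒞 a
compact set of matrices in E^{n×n} with all row sums equal to 1 and N(M) < 1; set
λ = max_{M ∈ 𝒞} N(M). For every infinite sequence of matrices from 𝒞, the product
M_i⋯M₁ converges to a rank-one matrix 𝟏c as fast as λ^i → 0: there is K with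
‖M_i⋯M₁ − 𝟏c‖ ≤ K·λ^i for all i ≥ 1. -/
theorem consensus_seminorm_contraction_convergence (n : ℕ)
    (N : Seminorm ℝ (EqRowSum n n))
    (hcons : ∀ M : EqRowSum n n,
      N M = 0 ↔ ∃ c : Fin n → ℝ, (M : Matrix (Fin n) (Fin n) ℝ) = Matrix.of fun _ j => c j)
    (hsub : ∀ M₁ M₂ : EqRowSum n n,
      N ⟨(M₂ : Matrix (Fin n) (Fin n) ℝ) * (M₁ : Matrix (Fin n) (Fin n) ℝ),
          EqRowSum.mul_mem M₂.2 M₁.2⟩ ≤ N M₂ * N M₁)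
    (C : Set (EqRowSum n n)) (hC : IsCompact C)
    (hrow1 : ∀ M ∈ C, ∀ i, ∑ j, (M : Matrix (Fin n) (Fin n) ℝ) i j = 1)
    (hcontr : ∀ M ∈ C, N M < 1) :
    ∀ Mseq : ℕ → EqRowSum n n, (∀ i, Mseq i ∈ C) →
      ∃ c : Fin n → ℝ, ∃ K : ℝ,
        Filter.Tendsto
          (fun i => matPNorm 2
            (prodSeq (fun k => (Mseq k : Matrix (Fin n) (Fin n) ℝ)) i
              - Matrix.of fun _ j => c j))
          Filter.atTop (nhds 0) ∧
        ∀ i : ℕ, 1 ≤ i →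
          matPNorm 2
            (prodSeq (fun k => (Mseq k : Matrix (Fin n) (Fin n) ℝ)) i
              - Matrix.of fun _ j => c j)
            ≤ K * (sSup ((fun M => N M) '' C)) ^ i := by
  letI : NormedAddCommGroup (Matrix (Fin n) (Fin n) ℝ) := Matrix.normedAddCommGroup
  letI : NormedSpace ℝ (Matrix (Fin n) (Fin n) ℝ) := Matrix.normedSpace
  intro Mseq hMseq
  classical
  have hCne : C.Nonempty := ⟨Mseq 0, hMseq 0⟩
  set lam := sSup ((fun M => N M) '' C) with hlam_def
  have hNcont : Continuous fun x : EqRowSum n n => N x := seminorm_continuous_fd N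
  have himg : IsCompact ((fun M => N M) '' C) := hC.image hNcont
  have hlam_mem : lam ∈ (fun M => N M) '' C := himg.sSup_mem (hCne.image _)
  have hlam_lt : lam < 1 := by
    obtain ⟨M₀, hM₀, hM₀eq⟩ := hlam_mem
    rw [← hM₀eq]
    exact hcontr M₀ hM₀
  have hlam_le : ∀ M ∈ C, N M ≤ lam := fun M hM => le_csSup himg.bddAbove ⟨M, hM, rfl⟩
  have hlam_nn : 0 ≤ lam := le_trans (apply_nonneg N _) (hlam_le _ (hMseq 0))
  have hone : 0 < 1 - lam := by linarith
  -- the product sequence, as elements of EqRowSum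
  have hmem : ∀ i, prodSeq (fun k => ((Mseq k : EqRowSum n n) : Matrix (Fin n) (Fin n) ℝ)) i
      ∈ EqRowSum n n := by
    intro i
    induction i with
    | zero =>
      intro r r'
      simp [prodSeq, Matrix.one_apply]
    | succ i ih => exact EqRowSum.mul_mem (Mseq i).2 ih
  set P : ℕ → EqRowSum n n := fun i => ⟨_, hmem i⟩ with hP
  have hPsucc : ∀ i, (P (i + 1) : Matrix (Fin n) (Fin n) ℝ)
      = (Mseq i : Matrix (Fin n) (Fin n) ℝ) * (P i : Matrix (Fin n) (Fin n) ℝ) := fun i => rfl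
  have hNP : ∀ i, N (P (i + 1)) ≤ lam ^ (i + 1) := by
    intro i
    induction i with
    | zero =>
      have h1 : P 1 = Mseq 0 := Subtype.ext (by
        show (Mseq 0 : Matrix (Fin n) (Fin n) ℝ) * prodSeq _ 0 = _
        simp [prodSeq])
      rw [h1, pow_one]
      exact hlam_le _ (hMseq 0)
    | succ i ih =>
      have h1 : N (P (i + 2)) ≤ N (Mseq (i + 1)) * N (P (i + 1)) := hsub (P (i + 1)) (Mseq (i + 1))
      calc N (P (i + 2)) ≤ N (Mseq (i + 1)) * N (P (i + 1)) := h1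
      _ ≤ lam * lam ^ (i + 1) :=
          mul_le_mul (hlam_le _ (hMseq (i + 1))) ih (apply_nonneg N _) hlam_nn
      _ = lam ^ (i + 2) := by ring
  obtain ⟨α, hα, hαle⟩ := exists_good_approx n N hcons
  obtain ⟨β, hβ, hβle⟩ := matPNorm_le_norm n
  obtain ⟨γ, hγ, hγle⟩ := norm_le_matPNorm n
  -- uniform bound on C
  obtain ⟨MB, hMB, hMBmax⟩ := hC.exists_isMaxOn hCne
    (((matPNorm_continuous n).comp continuous_subtype_val).continuousOn)
  set B := matPNorm 2 ((MB : EqRowSum n n) : Matrix (Fin n) (Fin n) ℝ) with hB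
  have hBnn : 0 ≤ B := matPNorm_nonneg _
  have hBle : ∀ M ∈ C, matPNorm 2 ((M : EqRowSum n n) : Matrix (Fin n) (Fin n) ℝ) ≤ B :=
    fun M hM => hMBmax hM
  -- choose consensus approximations
  choose cc hcc using fun i => hαle (P i)
  set A : ℕ → Matrix (Fin n) (Fin n) ℝ := fun i => Matrix.of fun _ j => cc i j with hA
  have hPA : ∀ i, 1 ≤ i → matPNorm 2 ((P i : Matrix (Fin n) (Fin n) ℝ) - A i) ≤ α * lam ^ i := by
    intro i hi
    refine (hcc i).trans (mul_le_mul_of_nonneg_left ?_ hα.le)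
    obtain ⟨j, rfl⟩ := Nat.exists_eq_succ_of_ne_zero (by omega : i ≠ 0)
    exact hNP j
  -- stochastic matrices absorb consensus matrices
  have habs : ∀ i (c : Fin n → ℝ),
      (Mseq i : Matrix (Fin n) (Fin n) ℝ) * (Matrix.of fun _ j => c j)
        = Matrix.of fun _ j => c j := by
    intro i c
    ext r j
    simp only [Matrix.mul_apply, Matrix.of_apply]
    rw [← Finset.sum_mul, hrow1 _ (hMseq i) r, one_mul]
  -- geometric bound on successive consensus approximations
  have hAd : ∀ i, 1 ≤ i → matPNorm 2 (A (i + 1) - A i) ≤ (α * lam + B * α) * lam ^ i := by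
    intro i hi
    have h1 : (P (i + 1) : Matrix (Fin n) (Fin n) ℝ) - A i
        = (Mseq i : Matrix (Fin n) (Fin n) ℝ) * ((P i : Matrix (Fin n) (Fin n) ℝ) - A i) := by
      rw [Matrix.mul_sub, ← hPsucc i, habs i]
    have h2 : matPNorm 2 ((P (i + 1) : Matrix (Fin n) (Fin n) ℝ) - A i) ≤ B * (α * lam ^ i) := by
      rw [h1]
      calc matPNorm 2 _
          ≤ matPNorm 2 (Mseq i : Matrix (Fin n) (Fin n) ℝ)
            * matPNorm 2 ((P i : Matrix (Fin n) (Fin n) ℝ) - A i) := matPNorm_mul_le _ _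
      _ ≤ B * (α * lam ^ i) :=
          mul_le_mul (hBle _ (hMseq i)) (hPA i hi) (matPNorm_nonneg _) hBnn
    have h3 : A (i + 1) - A i
        = (A (i + 1) - (P (i + 1) : Matrix (Fin n) (Fin n) ℝ))
          + ((P (i + 1) : Matrix (Fin n) (Fin n) ℝ) - A i) := by abel
    rw [h3]
    calc matPNorm 2 _
        ≤ matPNorm 2 (A (i + 1) - (P (i + 1) : Matrix (Fin n) (Fin n) ℝ))
          + matPNorm 2 ((P (i + 1) : Matrix (Fin n) (Fin n) ℝ) - A i) := matPNorm_add_le _ _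
    _ ≤ α * lam ^ (i + 1) + B * (α * lam ^ i) := by
        refine add_le_add ?_ h2
        rw [matPNorm_sub_comm]
        exact hPA (i + 1) (by omega)
    _ = (α * lam + B * α) * lam ^ i := by ring
  set D := γ * (α * lam + B * α) with hD
  have hDnn : 0 ≤ D :=
    mul_nonneg hγ.le (add_nonneg (mul_nonneg hα.le hlam_nn) (mul_nonneg hBnn hα.le))
  set f : ℕ → Matrix (Fin n) (Fin n) ℝ := fun i => A (i + 1) with hf
  have hgeom : ∀ i, dist (f i) (f (i + 1)) ≤ (D * lam) * lam ^ i := by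
    intro i
    rw [dist_eq_norm, norm_sub_rev]
    calc ‖A (i + 2) - A (i + 1)‖ ≤ γ * matPNorm 2 (A (i + 2) - A (i + 1)) := hγle _
    _ ≤ γ * ((α * lam + B * α) * lam ^ (i + 1)) :=
        mul_le_mul_of_nonneg_left (hAd (i + 1) (by omega)) hγ.le
    _ = (D * lam) * lam ^ i := by rw [hD]; ring
  have hcauchy : CauchySeq f := cauchySeq_of_le_geometric lam (D * lam) hlam_lt hgeom
  haveI : CompleteSpace (Matrix (Fin n) (Fin n) ℝ) :=
    FiniteDimensional.complete ℝ (Matrix (Fin n) (Fin n) ℝ)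
  obtain ⟨L, hL⟩ := cauchySeq_tendsto_of_complete hcauchy
  have hdist : ∀ i, dist (f i) L ≤ (D * lam) * lam ^ i / (1 - lam) := fun i =>
    dist_le_of_le_geometric_of_tendsto lam (D * lam) hlam_lt hgeom hL i
  have hLmem : L ∈ LinearMap.range (consMap n) := by
    have hclosed : IsClosed ((LinearMap.range (consMap n) : Submodule ℝ _)
        : Set (Matrix (Fin n) (Fin n) ℝ)) := Submodule.closed_of_finiteDimensional _
    exact hclosed.mem_of_tendsto hL (Filter.Eventually.of_forall fun i => ⟨cc (i + 1), rfl⟩)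
  obtain ⟨cL, hcL⟩ := hLmem
  have hofL : (Matrix.of fun _ j => cL j) = L := hcL
  have hAL : ∀ i, 1 ≤ i → ‖A i - L‖ ≤ D * lam ^ i / (1 - lam) := by
    intro i hi
    obtain ⟨j, rfl⟩ := Nat.exists_eq_succ_of_ne_zero (by omega : i ≠ 0)
    have h1 := hdist j
    rw [dist_eq_norm] at h1
    calc ‖A (j + 1) - L‖ ≤ D * lam * lam ^ j / (1 - lam) := h1
    _ = D * lam ^ (j + 1) / (1 - lam) := by ring
  have hmain : ∀ i, 1 ≤ i →
      matPNorm 2 ((P i : Matrix (Fin n) (Fin n) ℝ) - Matrix.of fun _ j => cL j)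
        ≤ (α + β * (D / (1 - lam))) * lam ^ i := by
    intro i hi
    have hsplit : (P i : Matrix (Fin n) (Fin n) ℝ) - Matrix.of (fun _ j => cL j)
        = ((P i : Matrix (Fin n) (Fin n) ℝ) - A i) + (A i - L) := by
      rw [hofL]; abel
    rw [hsplit]
    calc matPNorm 2 _
        ≤ matPNorm 2 ((P i : Matrix (Fin n) (Fin n) ℝ) - A i) + matPNorm 2 (A i - L) :=
        matPNorm_add_le _ _
    _ ≤ α * lam ^ i + β * (D * lam ^ i / (1 - lam)) := by
        refine add_le_add (hPA i hi) ?_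
        calc matPNorm 2 (A i - L) ≤ β * ‖A i - L‖ := hβle _
        _ ≤ β * (D * lam ^ i / (1 - lam)) := mul_le_mul_of_nonneg_left (hAL i hi) hβ.le
    _ = (α + β * (D / (1 - lam))) * lam ^ i := by
        field_simp
  refine ⟨cL, α + β * (D / (1 - lam)), ?_, fun i hi => hmain i hi⟩
  have hKly : Filter.Tendsto (fun i : ℕ => (α + β * (D / (1 - lam))) * lam ^ i)
      Filter.atTop (nhds 0) := by
    have h1 := (tendsto_pow_atTop_nhds_zero_of_lt_one hlam_nn hlam_lt).const_mul
      (α + β * (D / (1 - lam)))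
    simpa using h1
  apply squeeze_zero' ?_ ?_ hKly
  · exact Filter.Eventually.of_forall fun i => matPNorm_nonneg _
  · filter_upwards [Filter.eventually_ge_atTop 1] with i hi using hmain i hi
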